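/- Any continuous function f : [0,1]^n → ℝ can be written as f(x_1,…,x_n) = Σ_{q=1}^{2n+1} φ_q(Σ_{p=1}^{n} ψ_{pq}(x_p)), where φ_q : ℝ → ℝ and ψ_{pq} : [0,1] → ℝ are continuous functions of one variable. -/

import Mathlib

open Real Finset

namespace KA

noncomputable def clamp (t : ℝ) : ℝ := max 0 (min 1 t)

lemma clamp_continuous : Continuous clamp :=
  continuous_const.max (continuous_const.min continuous_id)

lemma clamp_nonneg (t : ℝ) : 0 ≤ clamp t := le_max_left _ _
lemma clamp_le_one (t : ℝ) : clamp t ≤ 1 := max_le zero_le_one (min_le_left _ _)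
lemma clamp_eq_one {t : ℝ} (h : 1 ≤ t) : clamp t = 1 := by
  unfold clamp; rw [min_eq_left h]; exact max_eq_right zero_le_one
lemma clamp_eq_zero {t : ℝ} (h : t ≤ 0) : clamp t = 0 := by
  unfold clamp
  rw [min_eq_right (le_trans h zero_le_one), max_eq_left h]

noncomputable def lo (n K q t : ℕ) : ℝ :=
  (((t*(2*n+1)+q+1 : ℕ) : ℝ) - ((2*n+1 : ℕ) : ℝ)) / K
noncomputable def hi (n K q t : ℕ) : ℝ := ((t*(2*n+1)+q : ℕ) : ℝ) / K

def iv (n K q t : ℕ) (x : ℝ) : Prop := lo n K q t ≤ x ∧ x ≤ hi n K q t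
def gp (n K q t : ℕ) (x : ℝ) : Prop := hi n K q t < x ∧ x < hi n K q t + 1/K
def vld (n K q t : ℕ) : Prop := t*(2*n+1)+q+1 ≤ K + (2*n+1)

lemma vld_le {n K q t : ℕ} (h : vld n K q t) : t ≤ K + 1 := by
  unfold vld at h; nlinarith

lemma hi_add (n K q t : ℕ) (hK : 1 ≤ K) :
    hi n K q t + 1/K = (((t*(2*n+1)+q : ℕ) : ℝ) + 1) / K := by
  have hK0 : (K:ℝ) ≠ 0 := by positivity
  unfold hi; field_simp

/-- `gp n K q t x` iff `t*(2n+1)+q < K*x < t*(2n+1)+q+1`. -/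
lemma gp_iff {n K q t : ℕ} (hK : 1 ≤ K) {x : ℝ} :
    gp n K q t x ↔ ((t*(2*n+1)+q : ℕ) : ℝ) < K * x ∧
      K * x < ((t*(2*n+1)+q : ℕ) : ℝ) + 1 := by
  have hK0 : (0:ℝ) < K := by exact_mod_cast hK
  unfold gp
  rw [hi_add n K q t hK]
  unfold hi
  rw [div_lt_iff₀ hK0, lt_div_iff₀ hK0]
  constructor
  · rintro ⟨a, b⟩; exact ⟨by linarith, by linarith⟩
  · rintro ⟨a, b⟩; exact ⟨by linarith, by linarith⟩

lemma iv_iff {n K q t : ℕ} (hK : 1 ≤ K) {x : ℝ} :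
    iv n K q t x ↔ ((t*(2*n+1)+q+1 : ℕ) : ℝ) - ((2*n+1:ℕ):ℝ) ≤ K * x ∧
      K * x ≤ ((t*(2*n+1)+q : ℕ) : ℝ) := by
  have hK0 : (0:ℝ) < K := by exact_mod_cast hK
  unfold iv lo hi
  rw [div_le_iff₀ hK0, le_div_iff₀ hK0]
  constructor
  · rintro ⟨a, b⟩; exact ⟨by linarith, by linarith⟩
  · rintro ⟨a, b⟩; exact ⟨by linarith, by linarith⟩

lemma gp_unique {n K q q' t t' : ℕ} (hq : q < 2*n+1) (hq' : q' < 2*n+1)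
    (hK : 1 ≤ K) {x : ℝ} (h : gp n K q t x) (h' : gp n K q' t' x) : q = q' ∧ t = t' := by
  rw [gp_iff hK] at h h'
  have l1 : t*(2*n+1)+q < t'*(2*n+1)+q' + 1 := by
    have : ((t*(2*n+1)+q : ℕ) : ℝ) < ((t'*(2*n+1)+q' : ℕ) : ℝ) + 1 := by
      linarith [h.1, h'.2]
    exact_mod_cast this
  have l2 : t'*(2*n+1)+q' < t*(2*n+1)+q + 1 := by
    have : ((t'*(2*n+1)+q' : ℕ) : ℝ) < ((t*(2*n+1)+q : ℕ) : ℝ) + 1 := by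
      linarith [h'.1, h.2]
    exact_mod_cast this
  have hNN : t*(2*n+1)+q = t'*(2*n+1)+q' := by omega
  have hqe : q = q' := by
    have e1 : (t*(2*n+1)+q) % (2*n+1) = q := by
      rw [add_comm, Nat.add_mul_mod_self_right]; exact Nat.mod_eq_of_lt hq
    have e2 : (t'*(2*n+1)+q') % (2*n+1) = q' := by
      rw [add_comm, Nat.add_mul_mod_self_right]; exact Nat.mod_eq_of_lt hq'
    rw [← e1, ← e2, hNN]
  refine ⟨hqe, ?_⟩
  subst hqe
  have : t*(2*n+1) = t'*(2*n+1) := by omega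
  have hm1 : 0 < 2*n+1 := by omega
  exact Nat.eq_of_mul_eq_mul_right hm1 this

lemma cover {n K q : ℕ} (hq : q < 2*n+1) (hK : 1 ≤ K) {x : ℝ}
    (hx0 : 0 ≤ x) (hx1 : x ≤ 1) (hgood : ∀ t, ¬ gp n K q t x) :
    ∃ t, vld n K q t ∧ iv n K q t x := by
  have hK0 : (0:ℝ) < K := by exact_mod_cast hK
  have hm0 : (0:ℝ) < ((2*n+1:ℕ):ℝ) := by positivity
  set m := 2*n+1 with hm
  have hq2n : (q:ℝ) ≤ 2*(n:ℝ) := by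
    have : q ≤ 2*n := by omega
    exact_mod_cast this
  have hmr : ((m:ℕ):ℝ) = 2*(n:ℝ)+1 := by rw [hm]; push_cast; ring
  by_cases hc : K * x ≤ q
  · refine ⟨0, by unfold vld; omega, ?_⟩
    rw [iv_iff hK]
    have hKx : 0 ≤ (K:ℝ) * x := mul_nonneg hK0.le hx0
    constructor
    · push_cast
      linarith
    · push_cast
      push_cast at hc
      linarith
  · push_neg at hc
    set z : ℝ := K * x - q with hz
    have hz0 : 0 < z := by
      show (0:ℝ) < (K:ℝ)*x - q
      push_cast at hc
      linarith
    set T : ℤ := ⌈z / ((m:ℕ):ℝ)⌉ with hT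
    have hT1 : 1 ≤ T := Int.ceil_pos.mpr (div_pos hz0 hm0)
    have hub : z ≤ T * ((m:ℕ):ℝ) := by
      have h1 := Int.le_ceil (z / ((m:ℕ):ℝ))
      calc z = (z / ((m:ℕ):ℝ)) * ((m:ℕ):ℝ) := by field_simp
        _ ≤ (T:ℝ) * ((m:ℕ):ℝ) := by nlinarith
    have hlb : (T:ℝ) * ((m:ℕ):ℝ) - ((m:ℕ):ℝ) < z := by
      have h1 := Int.ceil_lt_add_one (z / ((m:ℕ):ℝ))
      have h2 : (T:ℝ) - 1 < z / ((m:ℕ):ℝ) := by linarith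
      have := (lt_div_iff₀ hm0).mp h2
      linarith
    have hlb2 : (T:ℝ) * ((m:ℕ):ℝ) - ((m:ℕ):ℝ) + 1 ≤ z := by
      by_contra hcon
      push_neg at hcon
      have hT0 : 0 ≤ T - 1 := by omega
      apply hgood (T-1).toNat
      rw [gp_iff hK]
      have hcast : (((T-1).toNat : ℕ) : ℝ) = (T:ℝ) - 1 := by
        have h0 : ((T-1).toNat : ℤ) = T - 1 := Int.toNat_of_nonneg hT0
        have := congrArg (fun w : ℤ => (w:ℝ)) h0
        push_cast at this
        linarith
      constructor
      · push_cast
        rw [hcast]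
        rw [hm] at hlb
        push_cast at hlb
        linarith
      · push_cast
        rw [hcast]
        rw [hm] at hcon
        push_cast at hcon
        show (K:ℝ) * x < ((T:ℝ)-1) * (2*(n:ℝ)+1) + q + 1
        linarith
    have hTnn : 0 ≤ T := by omega
    have hcast : ((T.toNat : ℕ) : ℝ) = (T:ℝ) := by
      have h0 : ((T.toNat : ℤ)) = T := Int.toNat_of_nonneg hTnn
      exact_mod_cast congrArg (fun w : ℤ => (w:ℝ)) h0
    refine ⟨T.toNat, ?_, ?_⟩
    · have hzK : z ≤ K - q := by
        have hx : (K:ℝ) * x ≤ K := by nlinarith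
        show (K:ℝ)*x - q ≤ K - q
        linarith
      have hreal : ((T.toNat*m + q + 1 : ℕ) : ℝ) ≤ ((K + m : ℕ) : ℝ) := by
        push_cast
        rw [hcast, hmr] at *
        rw [hmr] at hlb2
        push_cast
        linarith [hlb2, hzK]
      unfold vld
      rw [← hm]
      exact_mod_cast hreal
    · rw [iv_iff hK]
      constructor
      · push_cast
        rw [hcast]
        rw [hmr] at hlb2
        show ((T:ℝ) * (2*(n:ℝ)+1) + q + 1) - (2*(n:ℝ)+1) ≤ (K:ℝ) * x
        linarith
      · push_cast
        rw [hcast]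
        rw [hmr] at hub
        show (K:ℝ) * x ≤ (T:ℝ) * (2*(n:ℝ)+1) + q
        linarith

/-- mixed-radix injectivity -/
lemma digits_inj {n B : ℕ} (hB : 1 ≤ B) :
    ∀ (t t' : Fin n → ℕ), (∀ p, t p < B) → (∀ p, t' p < B) →
    (∑ p : Fin n, t p * B^(p:ℕ)) = (∑ p : Fin n, t' p * B^(p:ℕ)) → t = t' := by
  induction n with
  | zero => intro t t' _ _ _; funext p; exact absurd p.2 (by omega)
  | succ k ih =>
    intro t t' ht ht' he
    rw [Fin.sum_univ_succ, Fin.sum_univ_succ] at he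
    simp only [Fin.val_zero, pow_zero, mul_one, Fin.val_succ] at he
    have hfac : ∀ (s : Fin (k+1) → ℕ), (∑ p : Fin k, s p.succ * B^((p:ℕ)+1)) =
        B * (∑ p : Fin k, s p.succ * B^(p:ℕ)) := by
      intro s
      rw [Finset.mul_sum]
      congr 1; funext p; ring
    rw [hfac t, hfac t'] at he
    have h0 : t 0 = t' 0 := by
      have e1 := Nat.add_mul_mod_self_left (t 0) B (∑ p : Fin k, t p.succ * B^(p:ℕ))
      have e2 := Nat.add_mul_mod_self_left (t' 0) B (∑ p : Fin k, t' p.succ * B^(p:ℕ))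
      have : t 0 % B = t' 0 % B := by rw [← e1, ← e2, he]
      rw [Nat.mod_eq_of_lt (ht 0), Nat.mod_eq_of_lt (ht' 0)] at this
      exact this
    have hrest : (∑ p : Fin k, t p.succ * B^(p:ℕ)) = ∑ p : Fin k, t' p.succ * B^(p:ℕ) := by
      have hB0 : 0 < B := hB
      have : B * (∑ p : Fin k, t p.succ * B^(p:ℕ)) = B * ∑ p : Fin k, t' p.succ * B^(p:ℕ) := by
        omega
      exact Nat.eq_of_mul_eq_mul_left hB0 this
    have := ih (fun p => t p.succ) (fun p => t' p.succ) (fun p => ht p.succ)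
      (fun p => ht' p.succ) hrest
    funext p
    rcases Fin.eq_zero_or_eq_succ p with h | ⟨j, rfl⟩
    · rw [h]; exact h0
    · exact congrFun this j


/-! ### Part 1: staircase functions and one refinement step -/

noncomputable def ramp (n K q t : ℕ) (x : ℝ) : ℝ := clamp ((x - hi n K q t) * K)

lemma ramp_continuous (n K q t : ℕ) : Continuous (ramp n K q t) :=
  clamp_continuous.comp ((continuous_id.sub continuous_const).mul continuous_const)

lemma ramp_nonneg (n K q t : ℕ) (x : ℝ) : 0 ≤ ramp n K q t x := clamp_nonneg _
lemma ramp_le_one (n K q t : ℕ) (x : ℝ) : ramp n K q t x ≤ 1 := clamp_le_one _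

lemma ramp_eq_one {n K q t : ℕ} (hK : 1 ≤ K) {x : ℝ} (h : hi n K q t + 1/K ≤ x) :
    ramp n K q t x = 1 := by
  have hK0 : (0:ℝ) < K := by exact_mod_cast hK
  apply clamp_eq_one
  have h2 : 1/(K:ℝ) ≤ x - hi n K q t := by linarith
  have h3 := mul_le_mul_of_nonneg_right h2 hK0.le
  rwa [one_div, inv_mul_cancel₀ (ne_of_gt hK0)] at h3

lemma ramp_eq_zero {n K q t : ℕ} (hK : 1 ≤ K) {x : ℝ} (h : x ≤ hi n K q t) :
    ramp n K q t x = 0 := by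
  have hK0 : (0:ℝ) < K := by exact_mod_cast hK
  apply clamp_eq_zero
  have : x - hi n K q t ≤ 0 := by linarith
  exact mul_nonpos_of_nonpos_of_nonneg this hK0.le

noncomputable def stair (n K q : ℕ) (c : ℕ → ℝ) (x : ℝ) : ℝ :=
  c 0 + ∑ t ∈ Finset.range (K+1), (c (t+1) - c t) * ramp n K q t x

lemma stair_continuous (n K q : ℕ) (c : ℕ → ℝ) : Continuous (stair n K q c) := by
  apply continuous_const.add
  exact continuous_finset_sum _ (fun t _ => continuous_const.mul (ramp_continuous n K q t))

lemma hi_mono {n K : ℕ} (q : ℕ) (hK : 1 ≤ K) {t t' : ℕ} (h : t ≤ t') :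
    hi n K q t ≤ hi n K q t' := by
  have hK0 : (0:ℝ) < K := by exact_mod_cast hK
  unfold hi
  have h2 : ((t*(2*n+1)+q : ℕ) : ℝ) ≤ ((t'*(2*n+1)+q : ℕ) : ℝ) := by
    exact_mod_cast Nat.add_le_add_right (Nat.mul_le_mul_right _ h) q
  gcongr

lemma lo_le_hi {n K q t : ℕ} (hK : 1 ≤ K) : lo n K q t ≤ hi n K q t := by
  have hK0 : (0:ℝ) < K := by exact_mod_cast hK
  unfold lo hi
  gcongr
  push_cast
  linarith

lemma gapend_le_lo {n K q t j : ℕ} (hK : 1 ≤ K) (h : t < j) :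
    hi n K q t + 1/K ≤ lo n K q j := by
  have hK0 : (0:ℝ) < K := by exact_mod_cast hK
  rw [hi_add n K q t hK]
  unfold lo
  gcongr
  have hnat : (t+1)*(2*n+1) ≤ j*(2*n+1) := Nat.mul_le_mul_right _ h
  have hr : (((t+1)*(2*n+1) : ℕ) : ℝ) ≤ ((j*(2*n+1) : ℕ) : ℝ) := by exact_mod_cast hnat
  push_cast at hr ⊢
  try linarith

lemma stair_eq_iv {n K q : ℕ} (hK : 1 ≤ K) (c : ℕ → ℝ) {j : ℕ} (hj : j ≤ K+1)
    {x : ℝ} (hx : iv n K q j x) : stair n K q c x = c j := by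
  unfold stair
  have hsplit : Finset.range (K+1) = Finset.range j ∪ Finset.Ico j (K+1) := by
    rw [Finset.range_eq_Ico, Finset.range_eq_Ico, Finset.Ico_union_Ico_eq_Ico (by omega) (by omega)]
  rw [hsplit, Finset.sum_union (by
    rw [Finset.range_eq_Ico]
    exact Finset.Ico_disjoint_Ico_consecutive 0 j (K+1))]
  have e1 : ∀ t ∈ Finset.range j, (c (t+1) - c t) * ramp n K q t x = c (t+1) - c t := by
    intro t ht
    rw [ramp_eq_one hK (le_trans (gapend_le_lo hK (Finset.mem_range.mp ht)) hx.1), mul_one]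
  have e2 : ∀ t ∈ Finset.Ico j (K+1), (c (t+1) - c t) * ramp n K q t x = 0 := by
    intro t ht
    rw [ramp_eq_zero hK (le_trans hx.2 (hi_mono q hK (Finset.mem_Ico.mp ht).1)), mul_zero]
  rw [Finset.sum_congr rfl e1, Finset.sum_congr rfl e2, Finset.sum_range_sub, Finset.sum_const_zero]
  ring

lemma stair_eq_gp {n K q : ℕ} (hK : 1 ≤ K) (c : ℕ → ℝ) {t : ℕ} (ht : t ≤ K)
    {x : ℝ} (hx : gp n K q t x) :
    stair n K q c x = c t + (c (t+1) - c t) * ramp n K q t x := by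
  unfold stair
  have hsplit : Finset.range (K+1) = Finset.range (t+1) ∪ Finset.Ico (t+1) (K+1) := by
    rw [Finset.range_eq_Ico, Finset.range_eq_Ico, Finset.Ico_union_Ico_eq_Ico (by omega) (by omega)]
  rw [hsplit, Finset.sum_union (by
    rw [Finset.range_eq_Ico]
    exact Finset.Ico_disjoint_Ico_consecutive 0 (t+1) (K+1)), Finset.sum_range_succ]
  have e1 : ∀ t' ∈ Finset.range t, (c (t'+1) - c t') * ramp n K q t' x = c (t'+1) - c t' := by
    intro t' ht'
    have h1 : hi n K q t' + 1/K ≤ lo n K q t := gapend_le_lo hK (Finset.mem_range.mp ht')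
    have h2 : lo n K q t ≤ hi n K q t := lo_le_hi hK
    rw [ramp_eq_one hK (by linarith [hx.1]), mul_one]
  have e2 : ∀ t' ∈ Finset.Ico (t+1) (K+1), (c (t'+1) - c t') * ramp n K q t' x = 0 := by
    intro t' ht'
    have h1 : hi n K q t + 1/K ≤ lo n K q t' := gapend_le_lo hK (Finset.mem_Ico.mp ht').1
    have h2 : lo n K q t' ≤ hi n K q t' := lo_le_hi hK
    rw [ramp_eq_zero hK (by linarith [hx.2]), mul_zero]
  rw [Finset.sum_congr rfl e1, Finset.sum_congr rfl e2, Finset.sum_range_sub, Finset.sum_const_zero]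
  ring

/-- convex combination bound -/
lemma convex_abs_le {a b y θ : ℝ} (h0 : 0 ≤ θ) (h1 : θ ≤ 1) :
    |a + (b - a) * θ - y| ≤ max |a - y| |b - y| := by
  have e : a + (b - a) * θ - y = (1 - θ) * (a - y) + θ * (b - y) := by ring
  have h2 := abs_add_le ((1 - θ) * (a - y)) (θ * (b - y))
  rw [abs_mul, abs_mul, abs_of_nonneg (by linarith : (0:ℝ) ≤ 1 - θ), abs_of_nonneg h0] at h2
  have hM1 : |a - y| ≤ max |a - y| |b - y| := le_max_left _ _
  have hM2 : |b - y| ≤ max |a - y| |b - y| := le_max_right _ _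
  rw [e]
  nlinarith [mul_le_mul_of_nonneg_left hM1 (by linarith : (0:ℝ) ≤ 1 - θ),
    mul_le_mul_of_nonneg_left hM2 h0, h2]


/-! ### Part 2: certificates and the refinement step -/

lemma nat_gap {D D' : ℕ} (h : D ≠ D') : (1:ℝ) ≤ |(D:ℝ) - (D':ℝ)| := by
  rcases Nat.lt_or_ge D D' with hl | hg
  · have : D + 1 ≤ D' := hl
    have : ((D:ℝ)) + 1 ≤ D' := by exact_mod_cast this
    rw [abs_sub_comm, abs_of_nonneg (by linarith)]
    linarith
  · have hl : D' < D := lt_of_le_of_ne hg (Ne.symm h)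
    have : ((D':ℝ)) + 1 ≤ D := by exact_mod_cast hl
    rw [abs_of_nonneg (by linarith)]
    linarith

lemma int_gap {Z Z' : ℤ} (h : Z ≠ Z') : (1:ℝ) ≤ |(Z:ℝ) - (Z':ℝ)| := by
  rcases Int.lt_or_gt_of_ne h with hl | hg
  · have : Z + 1 ≤ Z' := hl
    have : ((Z:ℝ)) + 1 ≤ Z' := by exact_mod_cast this
    rw [abs_sub_comm, abs_of_nonneg (by linarith)]
    linarith
  · have : Z' + 1 ≤ Z := hg
    have : ((Z':ℝ)) + 1 ≤ Z := by exact_mod_cast this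
    rw [abs_of_nonneg (by linarith)]
    linarith

lemma round_close {U y : ℝ} (hU : 0 < U) : |U * (⌊y/U⌋ : ℤ) - y| ≤ U := by
  have h1 := Int.floor_le (y/U)
  have h2 := Int.sub_one_lt_floor (y/U)
  have h1' : U * (⌊y/U⌋:ℝ) ≤ y := by
    have := mul_le_mul_of_nonneg_left h1 hU.le
    rwa [mul_div_cancel₀ _ (ne_of_gt hU)] at this
  have h2' : y - U < U * (⌊y/U⌋:ℝ) := by
    have := mul_lt_mul_of_pos_left h2 hU
    rw [mul_sub, mul_one, mul_div_cancel₀ _ (ne_of_gt hU)] at this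
    linarith
  rw [abs_le]
  constructor <;> linarith

def CertAt (n K : ℕ) (u ε : ℝ) (Φ : ℝ → Fin n × Fin (2*n+1) → ℝ) : Prop :=
  ∃ c : Fin n × Fin (2*n+1) → ℕ → ℝ,
    (∀ (pq : Fin n × Fin (2*n+1)) (t : ℕ) (x : ℝ), vld n K (pq.2 : ℕ) t →
      iv n K (pq.2 : ℕ) t x → 0 ≤ x → x ≤ 1 → |Φ x pq - c pq t| ≤ ε) ∧
    (∀ (q : Fin (2*n+1)) (ι ι' : Fin n → ℕ), (∀ p, vld n K (q:ℕ) (ι p)) →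
      (∀ p, vld n K (q:ℕ) (ι' p)) → ι ≠ ι' →
      u ≤ |(∑ p : Fin n, c (p,q) (ι p)) - ∑ p : Fin n, c (p,q) (ι' p)|)

lemma cert_stable {n K : ℕ} {u ε ε' : ℝ} {Φ Φ' : ℝ → Fin n × Fin (2*n+1) → ℝ}
    (h : CertAt n K u ε Φ) (hε' : 0 ≤ ε')
    (hd : ∀ x : ℝ, 0 ≤ x → x ≤ 1 → dist (Φ' x) (Φ x) ≤ ε') :
    CertAt n K u (ε + ε') Φ' := by
  obtain ⟨c, hc1, hc2⟩ := h
  refine ⟨c, ?_, hc2⟩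
  intro pq t x hv hi hx0 hx1
  have h1 := (dist_pi_le_iff hε').mp (hd x hx0 hx1) pq
  rw [Real.dist_eq] at h1
  have h2 := hc1 pq t x hv hi hx0 hx1
  calc |Φ' x pq - c pq t| ≤ |Φ' x pq - Φ x pq| + |Φ x pq - c pq t| := by
        have := abs_add_le (Φ' x pq - Φ x pq) (Φ x pq - c pq t)
        simpa using this
    _ ≤ ε' + ε := add_le_add h1 h2
    _ = ε + ε' := by ring

lemma cover_all {n K q : ℕ} (hq : q < 2*n+1) (hK : 2*n+1 ≤ K) {x : ℝ}
    (hx0 : 0 ≤ x) (hx1 : x ≤ 1) :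
    (∃ t, t ≤ K+1 ∧ vld n K q t ∧ iv n K q t x) ∨
    (∃ t, t ≤ K ∧ vld n K q t ∧ vld n K q (t+1) ∧ gp n K q t x) := by
  have hK1 : 1 ≤ K := by omega
  have hK0 : (0:ℝ) < K := by exact_mod_cast hK1
  by_cases hgap : ∃ t, gp n K q t x
  · obtain ⟨t, hg⟩ := hgap
    right
    have h1 := (gp_iff hK1).mp hg
    have hlt : t*(2*n+1)+q < K := by
      have : ((t*(2*n+1)+q : ℕ) : ℝ) < K := by
        have : (K:ℝ) * x ≤ K := by nlinarith
        linarith [h1.1]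
      exact_mod_cast this
    refine ⟨t, by nlinarith, by unfold vld; omega, by unfold vld; nlinarith, hg⟩
  · left
    push_neg at hgap
    obtain ⟨t, hv, hiv⟩ := cover hq hK1 hx0 hx1 hgap
    exact ⟨t, vld_le hv, hv, hiv⟩

lemma hi_sub_lo {n K q t : ℕ} (hK : 1 ≤ K) : hi n K q t - lo n K q t = (2*(n:ℝ))/K := by
  unfold hi lo
  rw [div_sub_div_same]
  congr 1
  push_cast
  ring

lemma lo_succ {n K q t : ℕ} (hK : 1 ≤ K) : lo n K q (t+1) = hi n K q t + 1/K := by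
  rw [hi_add n K q t hK]
  unfold lo
  congr 1
  push_cast
  ring

set_option maxHeartbeats 2000000 in
lemma step_ex {n : ℕ} (Ψ : ℝ → Fin n × Fin (2*n+1) → ℝ) (hΨ : Continuous Ψ)
    {δ : ℝ} (hδ : 0 < δ) (Kmin : ℕ) :
    ∃ (Ψ' : ℝ → Fin n × Fin (2*n+1) → ℝ) (K : ℕ) (u : ℝ),
      Continuous Ψ' ∧ Kmin ≤ K ∧ 2*n+1 ≤ K ∧ 0 < u ∧
      (∀ x : ℝ, 0 ≤ x → x ≤ 1 → dist (Ψ' x) (Ψ x) ≤ δ/2) ∧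
      CertAt n K u 0 Ψ' := by
  -- uniform continuity on [-1,2]
  have huc := (isCompact_Icc (a := (-1:ℝ)) (b := 2)).uniformContinuousOn_of_continuous
    hΨ.continuousOn
  rw [Metric.uniformContinuousOn_iff] at huc
  obtain ⟨d, hd0, hd⟩ := huc (δ/8) (by positivity)
  set K := max (max Kmin (2*n+1)) (⌈(2*(n:ℝ)+1)/d⌉₊ + 1) with hKdef
  have hKmin : Kmin ≤ K := le_trans (le_max_left _ _) (le_max_left _ _)
  have hKm : 2*n+1 ≤ K := le_trans (le_max_right _ _) (le_max_left _ _)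
  have hK1 : 1 ≤ K := by omega
  have hK0 : (0:ℝ) < K := by exact_mod_cast hK1
  have hmK : ((2*n+1 : ℕ):ℝ) ≤ K := by exact_mod_cast hKm
  have hKd : (2*(n:ℝ)+1)/K < d := by
    have h1 : ((2*(n:ℝ)+1)/d) < K := by
      have h2 : (⌈(2*(n:ℝ)+1)/d⌉₊ + 1 : ℕ) ≤ K := le_max_right _ _
      have h3 := Nat.le_ceil ((2*(n:ℝ)+1)/d)
      have h4 : ((⌈(2*(n:ℝ)+1)/d⌉₊ : ℝ) + 1) ≤ K := by exact_mod_cast h2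
      linarith
    rw [div_lt_iff₀ hK0]
    rw [div_lt_iff₀ hd0] at h1
    linarith
  obtain ⟨U, hUdef⟩ : ∃ U : ℝ, U = δ/8 := ⟨_, rfl⟩
  have hU : 0 < U := by rw [hUdef]; positivity
  obtain ⟨B, hBdef⟩ : ∃ B : ℕ, B = K + 2 := ⟨_, rfl⟩
  have hB1 : (1:ℝ) ≤ (B:ℝ) := by
    have h1 : (1:ℕ) ≤ B := by omega
    exact_mod_cast h1
  have hB0 : (0:ℝ) < (B:ℝ) := by linarith
  have hBn : (0:ℝ) < (B:ℝ)^n := pow_pos hB0 n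
  have hBn' : ((B:ℝ))^n ≠ 0 := ne_of_gt hBn
  obtain ⟨u0, hu0def⟩ : ∃ u : ℝ, u = U/(2*(B:ℝ)^n) := ⟨_, rfl⟩
  have hu00 : 0 < u0 := by rw [hu0def]; positivity
  have hu0U : u0 * (B:ℝ)^n = U/2 := by
    rw [hu0def]
    field_simp
  set c : Fin n × Fin (2*n+1) → ℕ → ℝ :=
    fun pq t => U * (⌊Ψ (lo n K (pq.2:ℕ) t) pq / U⌋ : ℤ) + u0 * t * (B:ℝ)^(pq.1:ℕ) with hcdef
  set Ψ' : ℝ → Fin n × Fin (2*n+1) → ℝ := fun x pq => stair n K (pq.2:ℕ) (c pq) x with hΨ'def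
  -- code bounds
  have hcode : ∀ (p : Fin n) (t : ℕ), t ≤ K+1 → 0 ≤ u0 * t * (B:ℝ)^(p:ℕ) ∧
      u0 * t * (B:ℝ)^(p:ℕ) ≤ U/2 := by
    intro p t ht
    constructor
    · positivity
    · have h1 : (t:ℝ) ≤ B := by
        have : t ≤ B := by omega
        exact_mod_cast this
      have h2 : (B:ℝ)^(p:ℕ) * B = (B:ℝ)^((p:ℕ)+1) := by ring
      have h3 : (B:ℝ)^((p:ℕ)+1) ≤ (B:ℝ)^n := pow_le_pow_right₀ hB1 p.2
      calc u0 * t * (B:ℝ)^(p:ℕ) ≤ u0 * B * (B:ℝ)^(p:ℕ) := by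
            have := mul_le_mul_of_nonneg_left h1 hu00.le
            exact mul_le_mul_of_nonneg_right this (by positivity)
        _ = u0 * (B:ℝ)^((p:ℕ)+1) := by ring
        _ ≤ u0 * (B:ℝ)^n := by
            exact mul_le_mul_of_nonneg_left h3 hu00.le
        _ = U/2 := hu0U
  -- closeness of c to Ψ at left endpoints
  have hclose : ∀ (pq : Fin n × Fin (2*n+1)) (t : ℕ), t ≤ K+1 →
      |c pq t - Ψ (lo n K (pq.2:ℕ) t) pq| ≤ U + U/2 := by
    intro pq t ht
    have h1 := round_close (y := Ψ (lo n K (pq.2:ℕ) t) pq) hU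
    have h2 := hcode pq.1 t ht
    rw [hcdef]
    simp only []
    have : U * (⌊Ψ (lo n K (pq.2:ℕ) t) pq / U⌋ : ℤ) + u0 * t * (B:ℝ)^((pq.1:ℕ))
        - Ψ (lo n K (pq.2:ℕ) t) pq
      = (U * (⌊Ψ (lo n K (pq.2:ℕ) t) pq / U⌋ : ℤ) - Ψ (lo n K (pq.2:ℕ) t) pq)
        + u0 * t * (B:ℝ)^((pq.1:ℕ)) := by ring
    rw [this]
    calc |_ + _| ≤ |U * (⌊Ψ (lo n K (pq.2:ℕ) t) pq / U⌋ : ℤ) - Ψ (lo n K (pq.2:ℕ) t) pq|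
          + |u0 * t * (B:ℝ)^((pq.1:ℕ))| := abs_add_le _ _
      _ ≤ U + U/2 := by
          refine add_le_add h1 ?_
          rw [abs_of_nonneg h2.1]
          exact h2.2
  -- lo endpoints lie in [-1,2], distances
  have hlo_mem : ∀ (q t : ℕ), q < 2*n+1 → vld n K q t → lo n K q t ∈ Set.Icc (-1:ℝ) 2 := by
    intro q t hq hv
    unfold lo
    constructor
    · rw [le_div_iff₀ hK0]
      have h1 : (1:ℝ) ≤ ((t*(2*n+1)+q+1 : ℕ):ℝ) := by
        have : 1 ≤ t*(2*n+1)+q+1 := by omega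
        exact_mod_cast this
      nlinarith
    · rw [div_le_iff₀ hK0]
      have h1 : ((t*(2*n+1)+q+1 : ℕ):ℝ) ≤ (K:ℝ) + ((2*n+1:ℕ):ℝ) := by
        exact_mod_cast hv
      nlinarith
  refine ⟨Ψ', K, u0, ?_, hKmin, hKm, hu00, ?_, ?_⟩
  · -- continuity
    rw [hΨ'def]
    exact continuous_pi (fun pq => stair_continuous n K (pq.2:ℕ) (c pq))
  · -- movement bound
    intro x hx0 hx1
    have hxm : x ∈ Set.Icc (-1:ℝ) 2 := ⟨by linarith, by linarith⟩
    rw [dist_pi_le_iff (by positivity)]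
    intro pq
    rw [Real.dist_eq]
    have hq : (pq.2:ℕ) < 2*n+1 := pq.2.2
    have key : ∀ t : ℕ, t ≤ K+1 → vld n K (pq.2:ℕ) t → |x - lo n K (pq.2:ℕ) t| < d →
        |c pq t - Ψ x pq| ≤ U + U/2 + δ/8 := by
      intro t ht hv hdist
      have hmem := hlo_mem (pq.2:ℕ) t hq hv
      have hΨd : dist (Ψ (lo n K (pq.2:ℕ) t)) (Ψ x) < δ/8 := by
        apply hd _ hmem _ hxm
        rw [Real.dist_eq]
        have : |lo n K (pq.2:ℕ) t - x| = |x - lo n K (pq.2:ℕ) t| := abs_sub_comm _ _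
        rw [this]
        exact hdist
      have hcomp : |Ψ (lo n K (pq.2:ℕ) t) pq - Ψ x pq| ≤ dist (Ψ (lo n K (pq.2:ℕ) t)) (Ψ x) := by
        have := dist_le_pi_dist (Ψ (lo n K (pq.2:ℕ) t)) (Ψ x) pq
        rwa [Real.dist_eq] at this
      have h1 := hclose pq t ht
      calc |c pq t - Ψ x pq|
          ≤ |c pq t - Ψ (lo n K (pq.2:ℕ) t) pq| + |Ψ (lo n K (pq.2:ℕ) t) pq - Ψ x pq| := by
            have := abs_add_le (c pq t - Ψ (lo n K (pq.2:ℕ) t) pq)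
              (Ψ (lo n K (pq.2:ℕ) t) pq - Ψ x pq)
            simpa using this
        _ ≤ (U + U/2) + δ/8 := add_le_add h1 (le_trans hcomp hΨd.le)
        _ = U + U/2 + δ/8 := by ring
    have h2n : ((2*n+1:ℕ):ℝ) = 2*(n:ℝ)+1 := by push_cast; ring
    rcases cover_all hq hKm hx0 hx1 with ⟨t, ht, hv, hiv⟩ | ⟨t, ht, hv, hv', hg⟩
    · -- interval case
      have he : Ψ' x pq = c pq t := stair_eq_iv hK1 (c pq) ht hiv
      rw [he]
      have hdist : |x - lo n K (pq.2:ℕ) t| < d := by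
        have hsub := hi_sub_lo (n := n) (K := K) (q := (pq.2:ℕ)) (t := t) hK1
        have hll : lo n K (pq.2:ℕ) t ≤ x := hiv.1
        have hrr : x ≤ hi n K (pq.2:ℕ) t := hiv.2
        rw [abs_of_nonneg (by linarith)]
        have : x - lo n K (pq.2:ℕ) t ≤ (2*(n:ℝ))/K := by linarith
        have h3 : (2*(n:ℝ))/K < d := by
          apply lt_of_le_of_lt _ hKd
          gcongr
          linarith
        linarith
      have := key t ht hv hdist
      calc |c pq t - Ψ x pq| ≤ U + U/2 + δ/8 := this
        _ ≤ δ/2 := by rw [hUdef]; linarith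
    · -- gap case
      have he : Ψ' x pq = c pq t + (c pq (t+1) - c pq t) * ramp n K (pq.2:ℕ) t x :=
        stair_eq_gp hK1 (c pq) ht hg
      rw [he]
      have hcv := convex_abs_le (a := c pq t) (b := c pq (t+1)) (y := Ψ x pq)
        (ramp_nonneg n K (pq.2:ℕ) t x) (ramp_le_one n K (pq.2:ℕ) t x)
      have hd1 : |x - lo n K (pq.2:ℕ) t| < d := by
        have hsub := hi_sub_lo (n := n) (K := K) (q := (pq.2:ℕ)) (t := t) hK1
        have hg1 : hi n K (pq.2:ℕ) t < x := hg.1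
        have hg2 : x < hi n K (pq.2:ℕ) t + 1/K := hg.2
        have hnn : (0:ℝ) ≤ 2*(n:ℝ)/K := by positivity
        rw [abs_of_nonneg (by linarith)]
        have : x - lo n K (pq.2:ℕ) t < (2*(n:ℝ))/K + 1/K := by linarith
        have h3 : (2*(n:ℝ))/K + 1/K ≤ (2*(n:ℝ)+1)/K := by
          rw [← add_div]
        linarith
      have hd2 : |x - lo n K (pq.2:ℕ) (t+1)| < d := by
        rw [lo_succ hK1]
        have hg1 : hi n K (pq.2:ℕ) t < x := hg.1
        have hg2 : x < hi n K (pq.2:ℕ) t + 1/K := hg.2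
        rw [abs_sub_comm, abs_of_nonneg (by linarith)]
        have h4 : (1:ℝ)/K ≤ (2*(n:ℝ)+1)/K := by
          gcongr
          linarith
        linarith
      have k1 := key t (by omega) hv hd1
      have k2 := key (t+1) (by omega) hv' hd2
      calc |c pq t + (c pq (t+1) - c pq t) * ramp n K (pq.2:ℕ) t x - Ψ x pq|
          ≤ max |c pq t - Ψ x pq| |c pq (t+1) - Ψ x pq| := hcv
        _ ≤ U + U/2 + δ/8 := max_le k1 k2
        _ ≤ δ/2 := by rw [hUdef]; linarith
  · -- certificate
    refine ⟨c, ?_, ?_⟩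
    · intro pq t x hv hiv hx0 hx1
      have he : Ψ' x pq = c pq t := stair_eq_iv hK1 (c pq) (vld_le hv) hiv
      rw [he, sub_self, abs_zero]
    · intro q ι ι' hvι hvι' hne
      have hsum : ∀ (κ : Fin n → ℕ),
          (∑ p : Fin n, c (p,q) (κ p))
            = U * ((∑ p : Fin n, ⌊Ψ (lo n K (q:ℕ) (κ p)) (p,q) / U⌋ : ℤ):ℝ)
              + u0 * ((∑ p : Fin n, κ p * B^(p:ℕ) : ℕ):ℝ) := by
        intro κ
        rw [Int.cast_sum, Nat.cast_sum, Finset.mul_sum, Finset.mul_sum,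
          ← Finset.sum_add_distrib]
        apply Finset.sum_congr rfl
        intro p _
        rw [hcdef]
        rw [Nat.cast_mul, Nat.cast_pow]
        ring
      set Z : ℤ := ∑ p : Fin n, ⌊Ψ (lo n K (q:ℕ) (ι p)) (p,q) / U⌋ with hZdef
      set Z' : ℤ := ∑ p : Fin n, ⌊Ψ (lo n K (q:ℕ) (ι' p)) (p,q) / U⌋ with hZ'def
      set D : ℕ := ∑ p : Fin n, ι p * B^(p:ℕ) with hDdef
      set D' : ℕ := ∑ p : Fin n, ι' p * B^(p:ℕ) with hD'def
      have hS : (∑ p : Fin n, c (p,q) (ι p)) - (∑ p : Fin n, c (p,q) (ι' p))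
          = U * ((Z:ℝ) - (Z':ℝ)) + u0 * ((D:ℝ) - (D':ℝ)) := by
        rw [hsum ι, hsum ι']
        ring
      have hDle : ∀ (κ : Fin n → ℕ), (∀ p, vld n K (q:ℕ) (κ p)) →
          ((∑ p : Fin n, κ p * B^(p:ℕ) : ℕ):ℝ) ≤ (B:ℝ)^n - 1 := by
        intro κ hκ
        rw [Nat.cast_sum]
        have hterm : ∀ p : Fin n, ((κ p * B^(p:ℕ) : ℕ):ℝ) = (κ p : ℝ) * ((B:ℝ))^(p:ℕ) :=
          fun p => by rw [Nat.cast_mul, Nat.cast_pow]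
        rw [Finset.sum_congr rfl (fun p _ => hterm p)]
        have hstep : ∀ p : Fin n, (κ p : ℝ) * (B:ℝ)^(p:ℕ) ≤ ((B:ℝ)-1) * (B:ℝ)^(p:ℕ) := by
          intro p
          have h1 : κ p ≤ K+1 := vld_le (hκ p)
          have h2 : (κ p : ℝ) ≤ (B:ℝ) - 1 := by
            have : ((κ p : ℕ):ℝ) ≤ ((K+1 : ℕ):ℝ) := by exact_mod_cast h1
            have hB : ((B:ℕ):ℝ) = (K:ℝ)+2 := by rw [hBdef]; push_cast; ring
            push_cast at this ⊢
            linarith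
          exact mul_le_mul_of_nonneg_right h2 (by positivity)
        calc (∑ p : Fin n, (κ p : ℝ) * (B:ℝ)^(p:ℕ))
            ≤ ∑ p : Fin n, ((B:ℝ)-1) * (B:ℝ)^(p:ℕ) := Finset.sum_le_sum (fun p _ => hstep p)
          _ = ((B:ℝ)-1) * ∑ p : Fin n, (B:ℝ)^(p:ℕ) := by rw [Finset.mul_sum]
          _ = ((B:ℝ)-1) * ∑ i ∈ Finset.range n, (B:ℝ)^i := by
              rw [Fin.sum_univ_eq_sum_range (fun i => (B:ℝ)^i) n]
          _ = (B:ℝ)^n - 1 := by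
              rw [mul_comm]
              exact geom_sum_mul (B:ℝ) n
      have hu0half : u0 ≤ U/2 := by
        rw [← hu0U]
        nlinarith [hu00, hBn, one_le_pow₀ hB1 (n := n)]
      by_cases hZZ : Z = Z'
      · -- digit part must differ
        have hDD : D ≠ D' := by
          intro hc
          apply hne
          exact digits_inj (B := B) (by omega) ι ι'
            (fun p => by have := vld_le (hvι p); omega)
            (fun p => by have := vld_le (hvι' p); omega) (by rw [← hDdef, ← hD'def, hc])
        rw [hS, hZZ, sub_self, mul_zero, zero_add, abs_mul, abs_of_nonneg hu00.le]
        have := nat_gap hDD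
        nlinarith
      · -- integer parts differ by at least 1
        have h1 : U ≤ U * |(Z:ℝ) - (Z':ℝ)| := by
          have := int_gap hZZ
          nlinarith
        have h2 : |u0 * ((D:ℝ) - (D':ℝ))| ≤ U/2 - u0 := by
          rw [abs_mul, abs_of_nonneg hu00.le]
          have hD1 := hDle ι hvι
          have hD2 := hDle ι' hvι'
          have hD0 : (0:ℝ) ≤ (D:ℝ) := Nat.cast_nonneg _
          have hD0' : (0:ℝ) ≤ (D':ℝ) := Nat.cast_nonneg _
          have habs : |(D:ℝ) - (D':ℝ)| ≤ (B:ℝ)^n - 1 := by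
            rw [abs_le]
            constructor <;> linarith
          calc u0 * |(D:ℝ) - (D':ℝ)| ≤ u0 * ((B:ℝ)^n - 1) := by
                exact mul_le_mul_of_nonneg_left habs hu00.le
            _ = U/2 - u0 := by rw [mul_sub, hu0U]; ring
        rw [hS]
        have h3 : |U * ((Z:ℝ) - (Z':ℝ)) + u0 * ((D:ℝ) - (D':ℝ))|
            ≥ |U * ((Z:ℝ) - (Z':ℝ))| - |u0 * ((D:ℝ) - (D':ℝ))| := by
          have := abs_sub_abs_le_abs_sub (U * ((Z:ℝ) - (Z':ℝ)))
            (-(u0 * ((D:ℝ) - (D':ℝ))))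
          rw [abs_neg, sub_neg_eq_add] at this
          linarith
        have h4 : |U * ((Z:ℝ) - (Z':ℝ))| = U * |(Z:ℝ) - (Z':ℝ)| := by
          rw [abs_mul, abs_of_nonneg hU.le]
        linarith


/-! ### Part 3: chain of refinements and the universal inner function -/

def StOk (n : ℕ) (S : (ℝ → Fin n × Fin (2*n+1) → ℝ) × ℝ) : Prop :=
  Continuous S.1 ∧ 0 < S.2

def StepRel (n : ℕ) (S S' : (ℝ → Fin n × Fin (2*n+1) → ℝ) × ℝ) (K : ℕ) (u : ℝ)
    (Kmin : ℕ) : Prop :=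
  Kmin ≤ K ∧ 2*n+1 ≤ K ∧ 0 < u ∧
  (∀ x : ℝ, 0 ≤ x → x ≤ 1 → dist (S'.1 x) (S.1 x) ≤ S.2/2) ∧
  CertAt n K u 0 S'.1 ∧
  S'.2 = min (S.2/2) (u/(8*((n:ℝ)+1)))

lemma step_ex' {n : ℕ} (S : (ℝ → Fin n × Fin (2*n+1) → ℝ) × ℝ) (hS : StOk n S)
    (Kmin : ℕ) : ∃ S' K u, StepRel n S S' K u Kmin ∧ StOk n S' := by
  obtain ⟨Ψ', K, u, hc, hK1, hK2, hu, hmv, hcert⟩ := step_ex S.1 hS.1 hS.2 Kmin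
  refine ⟨(Ψ', min (S.2/2) (u/(8*((n:ℝ)+1)))), K, u, ⟨hK1, hK2, hu, hmv, hcert, rfl⟩, hc, ?_⟩
  have h1 : 0 < S.2/2 := by have := hS.2; linarith
  have h2 : 0 < u/(8*((n:ℝ)+1)) := by positivity
  exact lt_min h1 h2

noncomputable def chain (n : ℕ) : (k : ℕ) → {S : (ℝ → Fin n × Fin (2*n+1) → ℝ) × ℝ // StOk n S}
  | 0 => ⟨(fun _ _ => 0, 1), continuous_const, one_pos⟩
  | (k+1) =>
    let h := step_ex' (chain n k).1 (chain n k).2 (k+1)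
    ⟨h.choose, h.choose_spec.choose_spec.choose_spec.2⟩

noncomputable def KK (n k : ℕ) : ℕ :=
  (step_ex' (chain n k).1 (chain n k).2 (k+1)).choose_spec.choose

noncomputable def uu (n k : ℕ) : ℝ :=
  (step_ex' (chain n k).1 (chain n k).2 (k+1)).choose_spec.choose_spec.choose

lemma chain_rel (n k : ℕ) :
    StepRel n (chain n k).1 (chain n (k+1)).1 (KK n k) (uu n k) (k+1) :=
  (step_ex' (chain n k).1 (chain n k).2 (k+1)).choose_spec.choose_spec.choose_spec.1


noncomputable def Ψs (n k : ℕ) : ℝ → Fin n × Fin (2*n+1) → ℝ := (chain n k).1.1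
noncomputable def δs (n k : ℕ) : ℝ := (chain n k).1.2

lemma δs_pos (n k : ℕ) : 0 < δs n k := (chain n k).2.2
lemma Ψs_cont (n k : ℕ) : Continuous (Ψs n k) := (chain n k).2.1

lemma δs_succ (n k : ℕ) : δs n (k+1) = min (δs n k / 2) (uu n k / (8*((n:ℝ)+1))) :=
  (chain_rel n k).2.2.2.2.2

lemma δs_succ_le (n k : ℕ) : δs n (k+1) ≤ δs n k / 2 := by
  rw [δs_succ]; exact min_le_left _ _

lemma move (n k : ℕ) : ∀ x : ℝ, 0 ≤ x → x ≤ 1 →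
    dist (Ψs n (k+1) x) (Ψs n k x) ≤ δs n k / 2 :=
  (chain_rel n k).2.2.2.1

lemma δs_le_pow (n k : ℕ) : δs n k ≤ (1/2:ℝ)^k := by
  induction k with
  | zero => simp [δs, chain]
  | succ k ih =>
    have h1 := δs_succ_le n k
    have : (1/2:ℝ)^(k+1) = (1/2:ℝ)^k / 2 := by ring
    rw [this]
    linarith

lemma dist_chain (n k : ℕ) : ∀ l, k ≤ l → ∀ x : ℝ, 0 ≤ x → x ≤ 1 →
    dist (Ψs n l x) (Ψs n k x) ≤ δs n k - δs n l := by
  intro l hkl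
  induction l, hkl using Nat.le_induction with
  | base => intro x _ _; simp
  | succ l hkl ih =>
    intro x hx0 hx1
    have h1 := move n l x hx0 hx1
    have h2 := ih x hx0 hx1
    have h3 := δs_succ_le n l
    calc dist (Ψs n (l+1) x) (Ψs n k x)
        ≤ dist (Ψs n (l+1) x) (Ψs n l x) + dist (Ψs n l x) (Ψs n k x) := dist_triangle _ _ _
      _ ≤ δs n l / 2 + (δs n k - δs n l) := add_le_add h1 h2
      _ ≤ δs n k - δs n (l+1) := by linarith

noncomputable def Ψinf (n : ℕ) : ℝ → Fin n × Fin (2*n+1) → ℝ :=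
  fun x => Filter.limUnder Filter.atTop (fun k => Ψs n k x)

lemma tendsto_Ψinf (n : ℕ) (x : ℝ) (hx0 : 0 ≤ x) (hx1 : x ≤ 1) :
    Filter.Tendsto (fun k => Ψs n k x) Filter.atTop (nhds (Ψinf n x)) := by
  have hcauchy : CauchySeq (fun k => Ψs n k x) := by
    apply cauchySeq_of_le_geometric (1/2:ℝ) 1 (by norm_num)
    intro k
    rw [dist_comm]
    calc dist (Ψs n (k+1) x) (Ψs n k x) ≤ δs n k / 2 := move n k x hx0 hx1
      _ ≤ (1/2:ℝ)^k / 2 := by linarith [δs_le_pow n k]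
      _ ≤ 1 * (1/2:ℝ)^k := by
          have : (0:ℝ) ≤ (1/2:ℝ)^k := by positivity
          linarith
  obtain ⟨L, hL⟩ := cauchySeq_tendsto_of_complete hcauchy
  rwa [Ψinf, hL.limUnder_eq]

lemma dist_inf (n k : ℕ) (x : ℝ) (hx0 : 0 ≤ x) (hx1 : x ≤ 1) :
    dist (Ψinf n x) (Ψs n k x) ≤ δs n k := by
  have T : Filter.Tendsto (fun l => dist (Ψs n l x) (Ψs n k x)) Filter.atTop
      (nhds (dist (Ψinf n x) (Ψs n k x))) :=
    (tendsto_Ψinf n x hx0 hx1).dist tendsto_const_nhds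
  apply le_of_tendsto T
  filter_upwards [Filter.eventually_ge_atTop k] with l hl
  have := dist_chain n k l hl x hx0 hx1
  have := δs_pos n l
  linarith

lemma Ψinf_contOn (n : ℕ) (pq : Fin n × Fin (2*n+1)) :
    ContinuousOn (fun x => Ψinf n x pq) (Set.Icc (0:ℝ) 1) := by
  have hunif : TendstoUniformlyOn (fun k x => Ψs n k x) (Ψinf n) Filter.atTop
      (Set.Icc (0:ℝ) 1) := by
    rw [Metric.tendstoUniformlyOn_iff]
    intro ε hε
    have h0 : Filter.Tendsto (fun k => (1/2:ℝ)^k) Filter.atTop (nhds 0) := by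
      apply tendsto_pow_atTop_nhds_zero_of_lt_one <;> norm_num
    have h1 : ∀ᶠ k in Filter.atTop, (1/2:ℝ)^k < ε :=
      h0.eventually_lt_const hε
    filter_upwards [h1] with k hk x hx
    calc dist (Ψinf n x) (Ψs n k x) ≤ δs n k := dist_inf n k x hx.1 hx.2
      _ ≤ (1/2:ℝ)^k := δs_le_pow n k
      _ < ε := hk
  have hcont : ContinuousOn (Ψinf n) (Set.Icc (0:ℝ) 1) :=
    hunif.continuousOn (Filter.Eventually.of_forall (fun k => (Ψs_cont n k).continuousOn)).frequently
  exact (continuous_apply pq).comp_continuousOn hcont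

lemma cert_inf (n k : ℕ) : ∃ ε : ℝ, 0 ≤ ε ∧ (n:ℝ)*ε ≤ uu n k/8 ∧ ε ≤ uu n k/8 ∧
    CertAt n (KK n k) (uu n k) ε (Ψinf n) := by
  refine ⟨δs n (k+1), (δs_pos n (k+1)).le, ?_, ?_, ?_⟩
  · have h1 : δs n (k+1) ≤ uu n k / (8*((n:ℝ)+1)) := by
      rw [δs_succ]; exact min_le_right _ _
    have hδ0 := (δs_pos n (k+1)).le
    rw [le_div_iff₀ (by norm_num : (0:ℝ) < 8)]
    have h1' := (le_div_iff₀ (by positivity : (0:ℝ) < 8*((n:ℝ)+1))).mp h1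
    nlinarith
  · have h1 : δs n (k+1) ≤ uu n k / (8*((n:ℝ)+1)) := by
      rw [δs_succ]; exact min_le_right _ _
    have hδ0 := (δs_pos n (k+1)).le
    rw [le_div_iff₀ (by norm_num : (0:ℝ) < 8)]
    have h1' := (le_div_iff₀ (by positivity : (0:ℝ) < 8*((n:ℝ)+1))).mp h1
    nlinarith
  · have hcert := (chain_rel n k).2.2.2.2.1
    have hstab := cert_stable hcert (δs_pos n (k+1)).le
      (fun x hx0 hx1 => dist_inf n (k+1) x hx0 hx1)
    rwa [zero_add] at hstab

lemma KK_ge (n k : ℕ) : k+1 ≤ KK n k := (chain_rel n k).1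
lemma KK_ge' (n k : ℕ) : 2*n+1 ≤ KK n k := (chain_rel n k).2.1
lemma uu_pos (n k : ℕ) : 0 < uu n k := (chain_rel n k).2.2.1


/-! ### Part 4: bump functions and the one-step approximation lemma -/

noncomputable def bump (u S y : ℝ) : ℝ := clamp ((u/4 - |y - S|) * (8/u))

lemma bump_continuous (u S : ℝ) : Continuous (bump u S) := by
  apply clamp_continuous.comp
  exact (continuous_const.sub ((continuous_id.sub continuous_const).abs)).mul continuous_const

lemma bump_nonneg (u S y : ℝ) : 0 ≤ bump u S y := clamp_nonneg _
lemma bump_le_one (u S y : ℝ) : bump u S y ≤ 1 := clamp_le_one _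

lemma bump_eq_one {u S y : ℝ} (hu : 0 < u) (h : |y - S| ≤ u/8) : bump u S y = 1 := by
  apply clamp_eq_one
  have h8 : (0:ℝ) < 8/u := by positivity
  have h1 : u/8 ≤ u/4 - |y - S| := by linarith
  calc (1:ℝ) = (u/8) * (8/u) := by field_simp
    _ ≤ (u/4 - |y - S|) * (8/u) := by
        apply mul_le_mul_of_nonneg_right _ h8.le
        linarith

lemma bump_eq_zero {u S y : ℝ} (hu : 0 < u) (h : u/4 ≤ |y - S|) : bump u S y = 0 := by
  apply clamp_eq_zero
  have h8 : (0:ℝ) ≤ 8/u := by positivity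
  apply mul_nonpos_of_nonpos_of_nonneg _ h8
  linarith

lemma bump_ne_zero {u S y : ℝ} (hu : 0 < u) (h : bump u S y ≠ 0) : |y - S| < u/4 := by
  by_contra hc
  push_neg at hc
  exact h (bump_eq_zero hu hc)

def cube (n : ℕ) : Set (Fin n → ℝ) := {x | ∀ i, x i ∈ Set.Icc (0:ℝ) 1}

lemma cube_compact (n : ℕ) : IsCompact (cube n) := by
  have : cube n = Set.pi Set.univ (fun _ : Fin n => Set.Icc (0:ℝ) 1) := by
    ext x
    constructor
    · intro h i _
      exact h i
    · intro h i
      exact h i trivial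
  rw [this]
  exact isCompact_univ_pi (fun _ => isCompact_Icc)

noncomputable def Tmap (n : ℕ) (q : Fin (2*n+1)) (x : Fin n → ℝ) : ℝ :=
  ∑ p : Fin n, Ψinf n (x p) (p, q)

lemma Tmap_contOn (n : ℕ) (q : Fin (2*n+1)) : ContinuousOn (Tmap n q) (cube n) := by
  unfold Tmap
  apply continuousOn_finset_sum
  intro p _
  have h1 : ContinuousOn (fun x : Fin n → ℝ => x p) (cube n) :=
    (continuous_apply p).continuousOn
  apply ContinuousOn.comp (Ψinf_contOn n (p, q)) h1
  intro x hx
  exact hx p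

open scoped Classical in
set_option maxHeartbeats 4000000 in
lemma onestep (n : ℕ) (g : (Fin n → ℝ) → ℝ) (hg : ContinuousOn g (cube n)) (M : ℝ)
    (hM : 0 < M) (hgM : ∀ x ∈ cube n, |g x| ≤ M) :
    ∃ φ : Fin (2*n+1) → ℝ → ℝ,
      (∀ q, Continuous (φ q)) ∧
      (∀ q y, |φ q y| ≤ M/((n:ℝ)+1)) ∧
      ∀ x ∈ cube n, |g x - ∑ q : Fin (2*n+1), φ q (Tmap n q x)| ≤
        (2*(n:ℝ)+1)/(2*(n:ℝ)+2) * M := by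
  have hm1 : (0:ℝ) < (n:ℝ)+1 := by positivity
  have h2m : (0:ℝ) < 2*(n:ℝ)+1 := by positivity
  set ω : ℝ := M/(2*(2*(n:ℝ)+1)) with hωdef
  have hω : 0 < ω := by positivity
  -- uniform continuity of g on the cube
  have huc := (cube_compact n).uniformContinuousOn_of_continuous hg
  rw [Metric.uniformContinuousOn_iff] at huc
  obtain ⟨d, hd0, hd⟩ := huc ω hω
  -- pick a scale k with (2n+1)/K < d
  obtain ⟨k, hk⟩ : ∃ k : ℕ, ((2*(n:ℝ)+1))/(KK n k) < d := by
    refine ⟨⌈(2*(n:ℝ)+1)/d⌉₊, ?_⟩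
    have h1 : (⌈(2*(n:ℝ)+1)/d⌉₊ + 1 : ℕ) ≤ KK n ⌈(2*(n:ℝ)+1)/d⌉₊ := KK_ge n _
    have h2 := Nat.le_ceil ((2*(n:ℝ)+1)/d)
    have h3 : ((2*(n:ℝ)+1)/d) < (KK n ⌈(2*(n:ℝ)+1)/d⌉₊ : ℝ) := by
      have : ((⌈(2*(n:ℝ)+1)/d⌉₊ : ℝ) + 1) ≤ (KK n ⌈(2*(n:ℝ)+1)/d⌉₊ : ℝ) := by
        exact_mod_cast h1
      linarith
    have hKpos : (0:ℝ) < (KK n ⌈(2*(n:ℝ)+1)/d⌉₊ : ℝ) := by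
      have := KK_ge' n ⌈(2*(n:ℝ)+1)/d⌉₊
      have : (1:ℕ) ≤ KK n ⌈(2*(n:ℝ)+1)/d⌉₊ := by omega
      exact_mod_cast this
    rw [div_lt_iff₀ hKpos]
    rw [div_lt_iff₀ hd0] at h3
    linarith
  set K := KK n k with hKdef
  set u := uu n k with hudef
  have hu : 0 < u := uu_pos n k
  have hKm : 2*n+1 ≤ K := KK_ge' n k
  have hK1 : 1 ≤ K := by omega
  have hK0 : (0:ℝ) < K := by exact_mod_cast hK1
  obtain ⟨ε, hε0, hεn, hεu, c, hcv, hcsep⟩ := cert_inf n k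
  -- valid tuples for channel q
  set VT : Fin (2*n+1) → Finset (Fin n → ℕ) := fun q =>
    (Fintype.piFinset (fun _ : Fin n => Finset.range (K+2))).filter
      (fun ι => ∀ p, vld n K (q:ℕ) (ι p)) with hVTdef
  -- sample points
  set ξf : Fin (2*n+1) → (Fin n → ℕ) → (Fin n → ℝ) := fun q ι p => clamp (lo n K (q:ℕ) (ι p))
    with hξdef
  have hξcube : ∀ q ι, ξf q ι ∈ cube n := by
    intro q ι p
    exact ⟨clamp_nonneg _, clamp_le_one _⟩
  -- the sums S_ι
  set Sν : Fin (2*n+1) → (Fin n → ℕ) → ℝ := fun q ι => ∑ p : Fin n, c (p, q) (ι p) with hSdef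
  set φ : Fin (2*n+1) → ℝ → ℝ := fun q y =>
    ∑ ι ∈ VT q, (g (ξf q ι) / ((n:ℝ)+1)) * bump u (Sν q ι) y with hφdef
  -- separation of S-values
  have hsep : ∀ q, ∀ ι ∈ VT q, ∀ ι' ∈ VT q, ι ≠ ι' → u ≤ |Sν q ι - Sν q ι'| := by
    intro q ι hι ι' hι' hne
    have h1 := (Finset.mem_filter.mp hι).2
    have h2 := (Finset.mem_filter.mp hι').2
    exact hcsep q ι ι' h1 h2 hne
  -- at any point y at most one bump is active
  have huniq : ∀ q (y : ℝ), ∀ ι ∈ VT q, ∀ ι' ∈ VT q,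
      bump u (Sν q ι) y ≠ 0 → bump u (Sν q ι') y ≠ 0 → ι = ι' := by
    intro q y ι hι ι' hι' h1 h2
    by_contra hne
    have hb1 := bump_ne_zero hu h1
    have hb2 := bump_ne_zero hu h2
    have := hsep q ι hι ι' hι' hne
    have habs : |Sν q ι - Sν q ι'| ≤ |y - Sν q ι| + |y - Sν q ι'| := by
      have := abs_sub_abs_le_abs_sub (y - Sν q ι') (y - Sν q ι)
      have h3 := abs_sub (y - Sν q ι) (y - Sν q ι')
      calc |Sν q ι - Sν q ι'| = |(y - Sν q ι') - (y - Sν q ι)| := by ring_nf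
        _ ≤ |y - Sν q ι'| + |y - Sν q ι| := abs_sub _ _
        _ = |y - Sν q ι| + |y - Sν q ι'| := by ring
    linarith
  -- sup bound for φ
  have hφbound : ∀ q y, |φ q y| ≤ M/((n:ℝ)+1) := by
    intro q y
    show |∑ ι ∈ VT q, (g (ξf q ι) / ((n:ℝ)+1)) * bump u (Sν q ι) y| ≤ M/((n:ℝ)+1)
    by_cases hex : ∃ ι ∈ VT q, bump u (Sν q ι) y ≠ 0
    · obtain ⟨ι₀, hι₀, hb₀⟩ := hex
      have hsum := Finset.sum_eq_single_of_mem
        (f := fun ι => (g (ξf q ι) / ((n:ℝ)+1)) * bump u (Sν q ι) y) ι₀ hι₀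
        (fun ι hι hne => by
          show (g (ξf q ι) / ((n:ℝ)+1)) * bump u (Sν q ι) y = 0
          by_cases hb : bump u (Sν q ι) y = 0
          · rw [hb, mul_zero]
          · exact absurd (huniq q y ι hι ι₀ hι₀ hb hb₀) hne)
      rw [hsum, abs_mul]
      have h1 : |g (ξf q ι₀) / ((n:ℝ)+1)| ≤ M/((n:ℝ)+1) := by
        rw [abs_div, abs_of_pos hm1]
        gcongr
        exact hgM _ (hξcube q ι₀)
      have h2 : |bump u (Sν q ι₀) y| ≤ 1 := by
        rw [abs_of_nonneg (bump_nonneg _ _ _)]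
        exact bump_le_one _ _ _
      calc |g (ξf q ι₀) / ((n:ℝ)+1)| * |bump u (Sν q ι₀) y|
          ≤ (M/((n:ℝ)+1)) * 1 := by
            apply mul_le_mul h1 h2 (abs_nonneg _)
            positivity
        _ = M/((n:ℝ)+1) := mul_one _
    · push_neg at hex
      rw [Finset.sum_eq_zero (fun ι hι => by rw [hex ι hι, mul_zero])]
      rw [abs_zero]
      positivity
  have hφcont : ∀ q, Continuous (φ q) := by
    intro q
    show Continuous fun y => ∑ ι ∈ VT q, (g (ξf q ι) / ((n:ℝ)+1)) * bump u (Sν q ι) y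
    exact continuous_finset_sum _ (fun ι _ => continuous_const.mul (bump_continuous _ _))
  refine ⟨φ, hφcont, hφbound, ?_⟩
  intro x hx
  set Bad : Finset (Fin (2*n+1)) := Finset.univ.filter
    (fun q => ∃ p t, gp n K (q:ℕ) t (x p)) with hBaddef
  have hBadcard : Bad.card ≤ n := by
    have hmap : ∀ q ∈ Bad, ∃ p : Fin n, ∃ t, gp n K (q:ℕ) t (x p) :=
      fun q hq => (Finset.mem_filter.mp hq).2
    by_cases hB : Bad = ∅
    · rw [hB]; simp
    · obtain ⟨q₀, hq₀⟩ := Finset.nonempty_iff_ne_empty.mpr hB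
      obtain ⟨p₀, _, _⟩ := hmap q₀ hq₀
      have hinj : Set.InjOn (fun q : Fin (2*n+1) =>
          if h : ∃ p : Fin n, ∃ t, gp n K (q:ℕ) t (x p) then h.choose else p₀) ↑Bad := by
        intro q hq q' hq' heq
        simp only [Finset.mem_coe] at hq hq'
        have hPq : ∃ p : Fin n, ∃ t, gp n K (q:ℕ) t (x p) := hmap q hq
        have hPq' : ∃ p : Fin n, ∃ t, gp n K (q':ℕ) t (x p) := hmap q' hq'
        simp only [dif_pos hPq, dif_pos hPq'] at heq
        obtain ⟨t, hgpt⟩ := hPq.choose_spec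
        obtain ⟨t', hgpt'⟩ := hPq'.choose_spec
        rw [heq] at hgpt
        have := gp_unique q.2 q'.2 hK1 hgpt hgpt'
        exact Fin.ext this.1
      have hcard := Finset.card_le_card_of_injOn _
        (fun q _ => Finset.mem_univ ((fun q : Fin (2*n+1) =>
          if h : ∃ p : Fin n, ∃ t, gp n K (q:ℕ) t (x p) then h.choose else p₀) q)) hinj
      simpa using hcard
  have hGoodmem : ∀ q : Fin (2*n+1), q ∉ Bad → ∃ ι ∈ VT q,
      ∀ p, iv n K (q:ℕ) (ι p) (x p) := by
    intro q hq
    have hnotbad : ∀ p : Fin n, ∀ t, ¬ gp n K (q:ℕ) t (x p) := by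
      intro p t hgp
      exact hq (Finset.mem_filter.mpr ⟨Finset.mem_univ q, p, t, hgp⟩)
    choose tfun htv hti using (fun p => cover q.2 hK1 (hx p).1 (hx p).2 (hnotbad p))
    refine ⟨tfun, ?_, hti⟩
    show tfun ∈ (Fintype.piFinset (fun _ : Fin n => Finset.range (K+2))).filter
      (fun ι => ∀ p, vld n K ((q:Fin (2*n+1)):ℕ) (ι p))
    rw [Finset.mem_filter]
    constructor
    · rw [Fintype.mem_piFinset]
      intro p
      rw [Finset.mem_range]
      have := vld_le (htv p)
      omega
    · exact htv
  have hval : ∀ q : Fin (2*n+1), q ∉ Bad →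
      |φ q (Tmap n q x) - g x / ((n:ℝ)+1)| ≤ ω/((n:ℝ)+1) := by
    intro q hq
    obtain ⟨ι, hιVT, hιiv⟩ := hGoodmem q hq
    have hvld : ∀ p, vld n K (q:ℕ) (ι p) := (Finset.mem_filter.mp hιVT).2
    have hTclose : |Tmap n q x - Sν q ι| ≤ (n:ℝ) * ε := by
      have h1 : ∀ p : Fin n, |Ψinf n (x p) (p,q) - c (p,q) (ι p)| ≤ ε :=
        fun p => hcv (p,q) (ι p) (x p) (hvld p) (hιiv p) (hx p).1 (hx p).2
      have hTS : Tmap n q x - Sν q ι = ∑ p : Fin n, (Ψinf n (x p) (p,q) - c (p,q) (ι p)) := by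
        rw [Finset.sum_sub_distrib]
        rfl
      calc |Tmap n q x - Sν q ι|
          = |∑ p : Fin n, (Ψinf n (x p) (p,q) - c (p,q) (ι p))| := by rw [hTS]
        _ ≤ ∑ p : Fin n, |Ψinf n (x p) (p,q) - c (p,q) (ι p)| :=
            Finset.abs_sum_le_sum_abs _ _
        _ ≤ ∑ _p : Fin n, ε := Finset.sum_le_sum (fun p _ => h1 p)
        _ = (n:ℝ) * ε := by
            rw [Finset.sum_const, nsmul_eq_mul]
            simp
    have hT8 : |Tmap n q x - Sν q ι| ≤ u/8 := le_trans hTclose hεn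
    have hb1 : bump u (Sν q ι) (Tmap n q x) = 1 := bump_eq_one hu hT8
    have hother : ∀ ι' ∈ VT q, ι' ≠ ι →
        (g (ξf q ι')/((n:ℝ)+1)) * bump u (Sν q ι') (Tmap n q x) = 0 := by
      intro ι' hι' hne
      have hsep' := hsep q ι hιVT ι' hι' (fun h => hne h.symm)
      have hfar : u/4 ≤ |Tmap n q x - Sν q ι'| := by
        have htri : |Sν q ι - Sν q ι'| ≤ |Tmap n q x - Sν q ι| + |Tmap n q x - Sν q ι'| := by
          calc |Sν q ι - Sν q ι'|
              = |(Tmap n q x - Sν q ι') - (Tmap n q x - Sν q ι)| := by ring_nf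
            _ ≤ |Tmap n q x - Sν q ι'| + |Tmap n q x - Sν q ι| := abs_sub _ _
            _ = |Tmap n q x - Sν q ι| + |Tmap n q x - Sν q ι'| := by ring
        linarith
      rw [bump_eq_zero hu hfar, mul_zero]
    have hφval : φ q (Tmap n q x) = g (ξf q ι)/((n:ℝ)+1) := by
      show (∑ ι' ∈ VT q, (g (ξf q ι') / ((n:ℝ)+1)) * bump u (Sν q ι') (Tmap n q x))
        = g (ξf q ι)/((n:ℝ)+1)
      rw [Finset.sum_eq_single_of_mem ι hιVT (fun ι' hι' hne => hother ι' hι' hne),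
        hb1, mul_one]
    have hxi : ∀ p : Fin n, |x p - ξf q ι p| < d := by
      intro p
      have hL1 : lo n K (q:ℕ) (ι p) ≤ x p := (hιiv p).1
      have hL2 : x p ≤ hi n K (q:ℕ) (ι p) := (hιiv p).2
      have hξlo : lo n K (q:ℕ) (ι p) ≤ ξf q ι p := by
        show lo n K (q:ℕ) (ι p) ≤ clamp (lo n K (q:ℕ) (ι p))
        unfold clamp
        rcases le_or_gt (lo n K (q:ℕ) (ι p)) 0 with h | h
        · exact le_trans h (le_max_left _ _)
        · have : min 1 (lo n K (q:ℕ) (ι p)) = lo n K (q:ℕ) (ι p) :=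
            min_eq_right (by linarith [(hx p).2])
          rw [this]
          exact le_max_right _ _
      have hξhi : ξf q ι p ≤ hi n K (q:ℕ) (ι p) := by
        show clamp (lo n K (q:ℕ) (ι p)) ≤ hi n K (q:ℕ) (ι p)
        unfold clamp
        apply max_le
        · linarith [(hx p).1, hL2]
        · exact le_trans (min_le_right _ _) (lo_le_hi hK1)
      have hsub := hi_sub_lo (n := n) (K := K) (q := (q:ℕ)) (t := ι p) hK1
      have habs : |x p - ξf q ι p| ≤ 2*(n:ℝ)/K := by
        rw [abs_le]
        constructor <;> linarith
      have : 2*(n:ℝ)/K < (2*(n:ℝ)+1)/K := by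
        gcongr
        linarith
      linarith [hk]
    have hdist : dist x (ξf q ι) < d := by
      rw [dist_pi_lt_iff hd0]
      intro p
      rw [Real.dist_eq]
      exact hxi p
    have hgx : |g x - g (ξf q ι)| < ω := by
      have := hd x hx (ξf q ι) (hξcube q ι) hdist
      rwa [Real.dist_eq] at this
    rw [hφval]
    calc |g (ξf q ι)/((n:ℝ)+1) - g x / ((n:ℝ)+1)|
        = |g (ξf q ι) - g x|/((n:ℝ)+1) := by
          rw [div_sub_div_same, abs_div, abs_of_pos hm1]
      _ ≤ ω/((n:ℝ)+1) := by
          gcongr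
          rw [abs_sub_comm]
          exact hgx.le
  -- sum split and final estimate
  set Good : Finset (Fin (2*n+1)) := Finset.univ \ Bad with hGdef
  have hcardsum : Good.card + Bad.card = 2*n+1 := by
    rw [hGdef, Finset.card_sdiff_of_subset (Finset.subset_univ _)]
    have h1 : Bad.card ≤ Finset.univ.card := Finset.card_le_card (Finset.subset_univ _)
    have h2 : (Finset.univ : Finset (Fin (2*n+1))).card = 2*n+1 := by
      rw [Finset.card_univ, Fintype.card_fin]
    omega
  have hGn : n+1 ≤ Good.card := by omega
  have hsplit : ∑ q : Fin (2*n+1), φ q (Tmap n q x)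
      = (∑ q ∈ Good, φ q (Tmap n q x)) + ∑ q ∈ Bad, φ q (Tmap n q x) :=
    (Finset.sum_sdiff (Finset.subset_univ Bad)).symm
  set A : ℝ := (Good.card : ℝ) with hAdef
  set Bc : ℝ := (Bad.card : ℝ) with hBcdef
  have hA1 : (n:ℝ)+1 ≤ A := by
    rw [hAdef]
    exact_mod_cast hGn
  have hABc : A + Bc = 2*(n:ℝ)+1 := by
    rw [hAdef, hBcdef]
    have : ((Good.card + Bad.card : ℕ) : ℝ) = ((2*n+1 : ℕ):ℝ) := by rw [hcardsum]
    push_cast at this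
    linarith
  have hBc0 : 0 ≤ Bc := Nat.cast_nonneg _
  have hA2 : A ≤ 2*(n:ℝ)+1 := by linarith
  have hdecomp : g x - ∑ q : Fin (2*n+1), φ q (Tmap n q x)
      = (g x - A * (g x/((n:ℝ)+1)))
        - (∑ q ∈ Good, (φ q (Tmap n q x) - g x/((n:ℝ)+1)))
        - ∑ q ∈ Bad, φ q (Tmap n q x) := by
    rw [hsplit, Finset.sum_sub_distrib, Finset.sum_const, nsmul_eq_mul, hAdef]
    ring
  have hT1 : |g x - A * (g x/((n:ℝ)+1))| ≤ (A - ((n:ℝ)+1))/((n:ℝ)+1) * M := by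
    have he : g x - A * (g x/((n:ℝ)+1)) = g x * ((((n:ℝ)+1) - A)/((n:ℝ)+1)) := by
      field_simp
    rw [he, abs_mul, abs_div, abs_of_pos hm1,
      abs_of_nonpos (show ((n:ℝ)+1) - A ≤ 0 by linarith), neg_sub]
    have hgxM := hgM x hx
    have hfac : (0:ℝ) ≤ (A - ((n:ℝ)+1))/((n:ℝ)+1) := div_nonneg (by linarith) hm1.le
    calc |g x| * ((A - ((n:ℝ)+1))/((n:ℝ)+1)) ≤ M * ((A - ((n:ℝ)+1))/((n:ℝ)+1)) :=
        mul_le_mul_of_nonneg_right hgxM hfac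
      _ = (A - ((n:ℝ)+1))/((n:ℝ)+1) * M := mul_comm _ _
  have hT2 : |∑ q ∈ Good, (φ q (Tmap n q x) - g x/((n:ℝ)+1))| ≤ A * (ω/((n:ℝ)+1)) := by
    calc |∑ q ∈ Good, (φ q (Tmap n q x) - g x/((n:ℝ)+1))|
        ≤ ∑ q ∈ Good, |φ q (Tmap n q x) - g x/((n:ℝ)+1)| := Finset.abs_sum_le_sum_abs _ _
      _ ≤ ∑ _q ∈ Good, ω/((n:ℝ)+1) := Finset.sum_le_sum (fun q hq => by
          apply hval q
          rw [hGdef] at hq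
          exact (Finset.mem_sdiff.mp hq).2)
      _ = A * (ω/((n:ℝ)+1)) := by
          rw [Finset.sum_const, nsmul_eq_mul, hAdef]
  have hT3 : |∑ q ∈ Bad, φ q (Tmap n q x)| ≤ Bc * (M/((n:ℝ)+1)) := by
    calc |∑ q ∈ Bad, φ q (Tmap n q x)|
        ≤ ∑ q ∈ Bad, |φ q (Tmap n q x)| := Finset.abs_sum_le_sum_abs _ _
      _ ≤ ∑ _q ∈ Bad, M/((n:ℝ)+1) := Finset.sum_le_sum (fun q _ => hφbound q _)
      _ = Bc * (M/((n:ℝ)+1)) := by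
          rw [Finset.sum_const, nsmul_eq_mul, hBcdef]
  have htotal : |g x - ∑ q : Fin (2*n+1), φ q (Tmap n q x)|
      ≤ (A - ((n:ℝ)+1))/((n:ℝ)+1) * M + A * (ω/((n:ℝ)+1)) + Bc * (M/((n:ℝ)+1)) := by
    have h3abs : ∀ a b c : ℝ, |a - b - c| ≤ |a|+|b|+|c| := by
      intro a b c
      calc |a - b - c| ≤ |a - b| + |c| := abs_sub _ _
        _ ≤ |a|+|b|+|c| := by linarith [abs_sub a b]
    rw [hdecomp]
    exact le_trans (h3abs _ _ _) (add_le_add (add_le_add hT1 hT2) hT3)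
  have hω2 : (2*(n:ℝ)+1) * ω = M/2 := by
    rw [hωdef]
    field_simp
  have hAω : A * ω ≤ (2*(n:ℝ)+1) * ω := mul_le_mul_of_nonneg_right hA2 hω.le
  have hfinal : (A - ((n:ℝ)+1))/((n:ℝ)+1) * M + A * (ω/((n:ℝ)+1)) + Bc * (M/((n:ℝ)+1))
      ≤ (2*(n:ℝ)+1)/(2*(n:ℝ)+2) * M := by
    have he1 : (A - ((n:ℝ)+1))/((n:ℝ)+1) * M + A * (ω/((n:ℝ)+1)) + Bc * (M/((n:ℝ)+1))
        = ((A - ((n:ℝ)+1))*M + A*ω + Bc*M) / ((n:ℝ)+1) := by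
      field_simp
    have he2 : (2*(n:ℝ)+1)/(2*(n:ℝ)+2) * M = ((2*(n:ℝ)+1)*M/2) / ((n:ℝ)+1) := by
      rw [div_mul_eq_mul_div, div_eq_div_iff (show (2*(n:ℝ)+2) ≠ 0 by linarith) hm1.ne']
      ring
    have hBM : Bc*M = (2*(n:ℝ)+1)*M - A*M := by
      have hBeq : Bc = 2*(n:ℝ)+1 - A := by linarith
      rw [hBeq]
      ring
    rw [he1, he2]
    gcongr
    linarith [hAω, hω2, hBM]
  exact le_trans htotal hfinal


/-! ### Part 5: iteration and the main theorem -/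

end KA

open KA in
set_option maxHeartbeats 4000000 in
/-- Kolmogorov–Arnold representation theorem: every continuous function on the unit
cube is an exact finite superposition of continuous univariate functions and addition. -/
theorem kolmogorov_arnold_representation (n : ℕ) (f : (Fin n → ℝ) → ℝ)
    (hf : ContinuousOn f {x : Fin n → ℝ | ∀ i, x i ∈ Set.Icc (0:ℝ) 1}) :
    ∃ (φ : ℕ → ℝ → ℝ) (ψ : Fin n → ℕ → ℝ → ℝ),
      (∀ q, Continuous (φ q)) ∧
      (∀ p q, ContinuousOn (ψ p q) (Set.Icc (0:ℝ) 1)) ∧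
      ∀ x : Fin n → ℝ, (∀ i, x i ∈ Set.Icc (0:ℝ) 1) →
        f x = ∑ q ∈ Finset.range (2 * n + 1), φ q (∑ p : Fin n, ψ p q (x p)) := by
  have hfc : ContinuousOn f (cube n) := hf
  obtain ⟨C, hC⟩ := (cube_compact n).exists_bound_of_continuousOn hfc
  set M0 : ℝ := max C 0 + 1 with hM0def
  have hM0 : 0 < M0 := by
    have := le_max_right C 0
    rw [hM0def]
    linarith
  have hfM0 : ∀ x ∈ cube n, |f x| ≤ M0 := by
    intro x hx
    have h1 := hC x hx
    rw [Real.norm_eq_abs] at h1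
    have h2 := le_max_left C 0
    rw [hM0def]
    linarith
  set θ : ℝ := (2*(n:ℝ)+1)/(2*(n:ℝ)+2) with hθdef
  have hθ0 : 0 < θ := by rw [hθdef]; positivity
  have hθ1 : θ < 1 := by
    rw [hθdef, div_lt_one (by positivity)]
    linarith
  set P : ℕ → ((Fin n → ℝ) → ℝ) → Prop :=
    fun j g => ContinuousOn g (cube n) ∧ ∀ x ∈ cube n, |g x| ≤ θ^j * M0 with hPdef
  have hstep : ∀ j (g : (Fin n → ℝ) → ℝ), P j g → ∃ φ : Fin (2*n+1) → ℝ → ℝ,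
      (∀ q, Continuous (φ q)) ∧ (∀ q y, |φ q y| ≤ (θ^j * M0)/((n:ℝ)+1)) ∧
      P (j+1) (g - fun x => ∑ q : Fin (2*n+1), φ q (Tmap n q x)) := by
    intro j g hg
    obtain ⟨φ, h1, h2, h3⟩ := onestep n g hg.1 (θ^j * M0) (by positivity) hg.2
    refine ⟨φ, h1, h2, ?_, ?_⟩
    · apply hg.1.sub
      apply continuousOn_finset_sum
      intro q _
      exact (h1 q).comp_continuousOn (Tmap_contOn n q)
    · intro x hx
      have h4 := h3 x hx
      have h5 : (g - fun x => ∑ q : Fin (2*n+1), φ q (Tmap n q x)) x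
          = g x - ∑ q : Fin (2*n+1), φ q (Tmap n q x) := rfl
      rw [h5, pow_succ']
      calc |g x - ∑ q : Fin (2*n+1), φ q (Tmap n q x)|
          ≤ (2*(n:ℝ)+1)/(2*(n:ℝ)+2) * (θ^j * M0) := h4
        _ = θ * (θ^j * M0) := by rw [hθdef]
        _ = θ * θ^j * M0 := by ring
  -- iterates
  let iter : ∀ j : ℕ, {g : (Fin n → ℝ) → ℝ // P j g} := fun j =>
    Nat.rec ⟨f, hfc, by
      intro x hx
      rw [pow_zero, one_mul]
      exact hfM0 x hx⟩
      (fun j prev => ⟨prev.1 - fun x => ∑ q : Fin (2*n+1),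
        (hstep j prev.1 prev.2).choose q (Tmap n q x),
        (hstep j prev.1 prev.2).choose_spec.2.2⟩) j
  set φs : ℕ → Fin (2*n+1) → ℝ → ℝ := fun j => (hstep j (iter j).1 (iter j).2).choose
    with hφsdef
  have hφscont : ∀ j q, Continuous (φs j q) :=
    fun j => (hstep j (iter j).1 (iter j).2).choose_spec.1
  have hφsbound : ∀ j q y, |φs j q y| ≤ (θ^j * M0)/((n:ℝ)+1) :=
    fun j => (hstep j (iter j).1 (iter j).2).choose_spec.2.1
  have hiter_succ : ∀ j, (iter (j+1)).1
      = (iter j).1 - fun x => ∑ q : Fin (2*n+1), φs j q (Tmap n q x) := fun j => rfl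
  have hsummable : Summable (fun j => (θ^j * M0)/((n:ℝ)+1)) := by
    have h1 := summable_geometric_of_lt_one hθ0.le hθ1
    have h2 := h1.mul_right (M0/((n:ℝ)+1))
    apply h2.congr
    intro j
    rw [mul_div_assoc]
  set Φ : Fin (2*n+1) → ℝ → ℝ := fun q y => ∑' j, φs j q y with hΦdef
  have hΦcont : ∀ q, Continuous (Φ q) := by
    intro q
    apply continuous_tsum (fun j => hφscont j q) hsummable
    intro j y
    rw [Real.norm_eq_abs]
    exact hφsbound j q y
  have hΦval : ∀ x ∈ cube n, f x = ∑ q : Fin (2*n+1), Φ q (Tmap n q x) := by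
    intro x hx
    set a : ℕ → ℝ := fun j => ∑ q : Fin (2*n+1), φs j q (Tmap n q x) with hadef
    have hpart : ∀ J, (∑ j ∈ Finset.range J, a j) = f x - (iter J).1 x := by
      intro J
      induction J with
      | zero => simp [show (iter 0).1 = f from rfl]
      | succ J ih =>
        rw [Finset.sum_range_succ, ih, hiter_succ J]
        have : ((iter J).1 - fun x => ∑ q : Fin (2*n+1), φs J q (Tmap n q x)) x
            = (iter J).1 x - ∑ q : Fin (2*n+1), φs J q (Tmap n q x) := rfl
        rw [this, hadef]
        ring
    have htend0 : Filter.Tendsto (fun J => (iter J).1 x) Filter.atTop (nhds 0) := by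
      have h1 : Filter.Tendsto (fun J : ℕ => θ^J) Filter.atTop (nhds 0) :=
        tendsto_pow_atTop_nhds_zero_of_lt_one hθ0.le hθ1
      have hg0 : Filter.Tendsto (fun J : ℕ => θ^J * M0) Filter.atTop (nhds 0) := by
        simpa using h1.mul_const M0
      exact squeeze_zero_norm (a := fun J => θ^J * M0) (fun J => by
        rw [Real.norm_eq_abs]
        exact (iter J).2.2 x hx) hg0
    have htlim : Filter.Tendsto (fun J => ∑ j ∈ Finset.range J, a j) Filter.atTop
        (nhds (f x)) := by
      have h1 : (fun J => ∑ j ∈ Finset.range J, a j) = fun J => f x - (iter J).1 x :=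
        funext hpart
      rw [h1]
      have h2 : Filter.Tendsto (fun J : ℕ => f x - (iter J).1 x) Filter.atTop
          (nhds (f x - 0)) := Filter.Tendsto.sub tendsto_const_nhds htend0
      simpa using h2
    have hsaq : ∀ q : Fin (2*n+1), Summable (fun j => φs j q (Tmap n q x)) := by
      intro q
      apply Summable.of_norm_bounded hsummable
      intro j
      rw [Real.norm_eq_abs]
      exact hφsbound j q _
    have hsa : Summable a := by
      rw [hadef]
      exact summable_sum (fun q _ => hsaq q)
    have hha := hsa.hasSum
    have := hha.tendsto_sum_nat
    have heq : ∑' j, a j = f x := tendsto_nhds_unique this htlim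
    rw [← heq, hadef]
    rw [Summable.tsum_finsetSum (fun q _ => hsaq q)]
  refine ⟨(fun qn => if h : qn < 2*n+1 then Φ ⟨qn, h⟩ else 0),
    (fun p qn => if h : qn < 2*n+1 then (fun t => Ψinf n t (p, ⟨qn, h⟩)) else 0),
    ?_, ?_, ?_⟩
  · intro q
    show Continuous (if h : q < 2*n+1 then Φ ⟨q, h⟩ else 0)
    by_cases h : q < 2*n+1
    · rw [dif_pos h]
      exact hΦcont _
    · rw [dif_neg h]
      exact continuous_const
  · intro p q
    show ContinuousOn (if h : q < 2*n+1 then (fun t => Ψinf n t (p, ⟨q, h⟩)) else 0)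
      (Set.Icc (0:ℝ) 1)
    by_cases h : q < 2*n+1
    · rw [dif_pos h]
      exact Ψinf_contOn n (p, ⟨q, h⟩)
    · rw [dif_neg h]
      exact continuousOn_const
  · intro x hx
    have hx' : x ∈ cube n := hx
    rw [hΦval x hx']
    rw [← Fin.sum_univ_eq_sum_range (fun qn => (if h : qn < 2*n+1 then Φ ⟨qn, h⟩ else 0)
      (∑ p : Fin n, (if h : qn < 2*n+1 then (fun t => Ψinf n t (p, ⟨qn, h⟩)) else 0) (x p)))
      (2*n+1)]
    apply Finset.sum_congr rfl
    intro q _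
    have hq : (q:ℕ) < 2*n+1 := q.2
    simp only [hq, dif_pos]
    have h1 : (⟨(q:ℕ), hq⟩ : Fin (2*n+1)) = q := Fin.eta q hq
    rw [h1]
    rfl
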